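/- Let S_{V,4} be the linear span of S_V and φ₄ in ℂ² ⊗ ℂ² ⊗ ℂ². Then the set of one-dimensional subspaces of S_{V,4} spanned by product vectors has exactly 6 elements, namely those spanned by: |000⟩; |111⟩; (|0⟩ − |1⟩) ⊗ (|0⟩ − |1⟩) ⊗ (|0⟩ − |1⟩); |1⟩ ⊗ (|0⟩ − |1⟩) ⊗ |0⟩; |0⟩ ⊗ |1⟩ ⊗ (|0⟩ − |1⟩); and (|0⟩ − |1⟩) ⊗ |0⟩ ⊗ |1⟩. In particular, every product vector in S_{V,4} is a scalar multiple of one of these six vectors. -/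

import Mathlib

noncomputable section

abbrev Q : Type := EuclideanSpace ℂ (Fin 2)
abbrev Q2 : Type := EuclideanSpace ℂ (Fin 2 × Fin 2)
abbrev Q3 : Type := EuclideanSpace ℂ (Fin 2 × Fin 2 × Fin 2)

/-- standard basis vector of ℂ² -/
def ket2 (i : Fin 2) : Q := EuclideanSpace.single i 1

/-- the state |+⟩ -/
def plus : Q := (Real.sqrt 2 : ℂ)⁻¹ • (ket2 0 + ket2 1)

/-- the state |−⟩ -/
def minus : Q := (Real.sqrt 2 : ℂ)⁻¹ • (ket2 0 - ket2 1)

/-- elementary tensor of three qubit vectors, in ℂ² ⊗ ℂ² ⊗ ℂ² ≅ ℂ⁸ -/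
def tp3 (u v w : Q) : Q3 := WithLp.toLp 2 (fun (p : Fin 2 × Fin 2 × Fin 2) => u p.1 * v p.2.1 * w p.2.2)

/-- a product vector in ℂ² ⊗ ℂ² ⊗ ℂ² -/
def IsProd3 (ξ : Q3) : Prop := ∃ u v w : Q, ξ = tp3 u v w

/-- the set of one-dimensional subspaces of `T` spanned by (nonzero) product vectors -/
def prodLines3 (T : Submodule ℂ Q3) : Set (Submodule ℂ Q3) :=
  {L | ∃ ξ : Q3, ξ ≠ 0 ∧ ξ ∈ T ∧ IsProd3 ξ ∧ L = Submodule.span ℂ {ξ}}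

/-- a factorized vector across the bipartite cut {1} | {2,3} -/
def cut1 (u : Q) (η : Q2) : Q3 := WithLp.toLp 2 (fun (p : Fin 2 × Fin 2 × Fin 2) => u p.1 * η p.2)

/-- a factorized vector across the bipartite cut {2} | {1,3} -/
def cut2 (u : Q) (η : Q2) : Q3 := WithLp.toLp 2 (fun (p : Fin 2 × Fin 2 × Fin 2) => u p.2.1 * η (p.1, p.2.2))

/-- a factorized vector across the bipartite cut {3} | {1,2} -/
def cut3 (u : Q) (η : Q2) : Q3 := WithLp.toLp 2 (fun (p : Fin 2 × Fin 2 × Fin 2) => u p.2.2 * η (p.1, p.2.1))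

def φ₁ : Q3 := tp3 (ket2 0) (ket2 1) plus
def φ₂ : Q3 := tp3 (ket2 1) plus (ket2 0)
def φ₃ : Q3 := tp3 plus (ket2 0) (ket2 1)
def φ₄ : Q3 := tp3 minus minus minus

/-- the span of the three-qubit UPB of Bennett et al. -/
def V3 : Submodule ℂ Q3 := Submodule.span ℂ {φ₁, φ₂, φ₃, φ₄}

/-- the orthogonal complement of the span of the three-qubit UPB -/
def SV : Submodule ℂ Q3 := V3ᗮ

/-- the standard basis vector |xyz⟩ of ℂ² ⊗ ℂ² ⊗ ℂ² -/
def ketE (x y z : Fin 2) : Q3 := tp3 (ket2 x) (ket2 y) (ket2 z)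

/-- the perturbation of `S_V` by `φ₄` -/
def SV4 : Submodule ℂ Q3 := SV ⊔ Submodule.span ℂ {φ₄}

lemma ket2_apply (i j : Fin 2) : ket2 i j = if j = i then 1 else 0 := by
  simp [ket2, EuclideanSpace.single_apply]
lemma plus_zero : plus 0 = (Real.sqrt 2 : ℂ)⁻¹ := by simp [plus, ket2_apply]
lemma plus_one : plus 1 = (Real.sqrt 2 : ℂ)⁻¹ := by simp [plus, ket2_apply]
lemma minus_zero : minus 0 = (Real.sqrt 2 : ℂ)⁻¹ := by simp [minus, ket2_apply]
lemma minus_one : minus 1 = -(Real.sqrt 2 : ℂ)⁻¹ := by simp [minus, ket2_apply]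

lemma sqrt2_ne : (Real.sqrt 2 : ℂ) ≠ 0 := by
  simp only [ne_eq, Complex.ofReal_eq_zero]
  positivity
lemma sqrt2_sq : (Real.sqrt 2 : ℂ) * (Real.sqrt 2 : ℂ) = 2 := by
  rw [← Complex.ofReal_mul, Real.mul_self_sqrt (by norm_num)]
  norm_num

lemma inner_expand (x y : Q3) :
    inner (𝕜 := ℂ) x y =
      starRingEnd ℂ (x (0,0,0)) * y (0,0,0) + starRingEnd ℂ (x (0,0,1)) * y (0,0,1) +
      starRingEnd ℂ (x (0,1,0)) * y (0,1,0) + starRingEnd ℂ (x (0,1,1)) * y (0,1,1) +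
      starRingEnd ℂ (x (1,0,0)) * y (1,0,0) + starRingEnd ℂ (x (1,0,1)) * y (1,0,1) +
      starRingEnd ℂ (x (1,1,0)) * y (1,1,0) + starRingEnd ℂ (x (1,1,1)) * y (1,1,1) := by
  simp [PiLp.inner_apply, RCLike.inner_apply, Fintype.sum_prod_type, Fin.sum_univ_two]
  ring

lemma inner_phi1 (ξ : Q3) :
    inner (𝕜 := ℂ) φ₁ ξ = (Real.sqrt 2 : ℂ)⁻¹ * (ξ (0,1,0) + ξ (0,1,1)) := by
  rw [inner_expand]
  simp [φ₁, tp3, ket2_apply, plus_zero, plus_one, map_inv₀, Complex.conj_ofReal]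
  ring
lemma inner_phi2 (ξ : Q3) :
    inner (𝕜 := ℂ) φ₂ ξ = (Real.sqrt 2 : ℂ)⁻¹ * (ξ (1,0,0) + ξ (1,1,0)) := by
  rw [inner_expand]
  simp [φ₂, tp3, ket2_apply, plus_zero, plus_one, map_inv₀, Complex.conj_ofReal]
  ring
lemma inner_phi3 (ξ : Q3) :
    inner (𝕜 := ℂ) φ₃ ξ = (Real.sqrt 2 : ℂ)⁻¹ * (ξ (0,0,1) + ξ (1,0,1)) := by
  rw [inner_expand]
  simp [φ₃, tp3, ket2_apply, plus_zero, plus_one, map_inv₀, Complex.conj_ofReal]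
  ring
lemma inner_phi4 (ξ : Q3) :
    inner (𝕜 := ℂ) φ₄ ξ = ((Real.sqrt 2 : ℂ)⁻¹)^3 *
      (ξ (0,0,0) - ξ (0,0,1) - ξ (0,1,0) + ξ (0,1,1)
        - ξ (1,0,0) + ξ (1,0,1) + ξ (1,1,0) - ξ (1,1,1)) := by
  rw [inner_expand]
  simp [φ₄, tp3, minus_zero, minus_one, map_inv₀, Complex.conj_ofReal]
  ring

lemma phi4_apply (p : Fin 2 × Fin 2 × Fin 2) : φ₄ p = minus p.1 * minus p.2.1 * minus p.2.2 := rfl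

lemma inner_phi4_phi4 : inner (𝕜 := ℂ) φ₄ φ₄ = 1 := by
  rw [inner_phi4]
  simp only [phi4_apply, minus_zero, minus_one]
  have h := sqrt2_sq
  have h6 : (Real.sqrt 2 : ℂ)^6 = 8 := by
    rw [show (Real.sqrt 2:ℂ)^6 = ((Real.sqrt 2:ℂ) * (Real.sqrt 2:ℂ))^3 by ring, h]
    norm_num
  ring_nf
  rw [inv_pow, h6]
  norm_num

lemma mem_SV4_iff (ξ : Q3) :
    ξ ∈ SV4 ↔ ξ (0,1,0) + ξ (0,1,1) = 0 ∧ ξ (1,0,0) + ξ (1,1,0) = 0 ∧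
      ξ (0,0,1) + ξ (1,0,1) = 0 := by
  constructor
  · intro h
    rw [SV4, Submodule.mem_sup] at h
    obtain ⟨s, hs, t, ht, rfl⟩ := h
    obtain ⟨c, rfl⟩ := Submodule.mem_span_singleton.mp ht
    rw [SV, Submodule.mem_orthogonal] at hs
    have m1 : φ₁ ∈ V3 := Submodule.subset_span (by simp)
    have m2 : φ₂ ∈ V3 := Submodule.subset_span (by simp)
    have m3 : φ₃ ∈ V3 := Submodule.subset_span (by simp)
    have h1 := hs φ₁ m1; have h2 := hs φ₂ m2; have h3 := hs φ₃ m3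
    rw [inner_phi1] at h1; rw [inner_phi2] at h2; rw [inner_phi3] at h3
    have hne : (Real.sqrt 2 : ℂ)⁻¹ ≠ 0 := inv_ne_zero sqrt2_ne
    have e1 := (mul_eq_zero.mp h1).resolve_left hne
    have e2 := (mul_eq_zero.mp h2).resolve_left hne
    have e3 := (mul_eq_zero.mp h3).resolve_left hne
    refine ⟨?_, ?_, ?_⟩ <;>
      · simp only [PiLp.add_apply, PiLp.smul_apply, smul_eq_mul, phi4_apply,
          minus_zero, minus_one]
        first
        | linear_combination e1
        | linear_combination e2
        | linear_combination e3
  · rintro ⟨e1, e2, e3⟩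
    set c : ℂ := inner (𝕜 := ℂ) φ₄ ξ with hc
    have hsplit : ξ = (ξ - c • φ₄) + c • φ₄ := by abel
    rw [SV4, hsplit]
    refine Submodule.add_mem_sup ?_
      (Submodule.smul_mem _ c (Submodule.mem_span_singleton_self φ₄))
    rw [SV, Submodule.mem_orthogonal]
    intro x hx
    rw [V3] at hx
    induction hx using Submodule.span_induction with
    | mem g hg =>
      have key : ∀ g' : Q3, g' = φ₁ ∨ g' = φ₂ ∨ g' = φ₃ ∨ g' = φ₄ →
          inner (𝕜 := ℂ) g' (ξ - c • φ₄) = 0 := by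
        rintro g' (rfl | rfl | rfl | rfl) <;>
          rw [inner_sub_right, inner_smul_right]
        · rw [inner_phi1, inner_phi1]
          simp only [phi4_apply, minus_zero, minus_one]
          linear_combination (Real.sqrt 2 : ℂ)⁻¹ * e1
        · rw [inner_phi2, inner_phi2]
          simp only [phi4_apply, minus_zero, minus_one]
          linear_combination (Real.sqrt 2 : ℂ)⁻¹ * e2
        · rw [inner_phi3, inner_phi3]
          simp only [phi4_apply, minus_zero, minus_one]
          linear_combination (Real.sqrt 2 : ℂ)⁻¹ * e3
        · rw [inner_phi4_phi4, ← hc]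
          ring
      exact key g (by simpa using hg)
    | zero => simp
    | add x y hx hy ihx ihy => rw [inner_add_left, ihx, ihy]; ring
    | smul a x hx ih => rw [inner_smul_left, ih]; ring

lemma span_eq_of_smul {x y : Q3} {c : ℂ} (hc : c ≠ 0) (h : x = c • y) :
    Submodule.span ℂ {x} = Submodule.span ℂ {y} := by
  rw [h]
  exact Submodule.span_singleton_smul_eq (IsUnit.mk0 c hc) y

lemma span_ne_of {x y : Q3} (p : Fin 2 × Fin 2 × Fin 2) (hx : x p ≠ 0) (hy : y p = 0) :
    Submodule.span ℂ ({x} : Set Q3) ≠ Submodule.span ℂ {y} := by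
  intro h
  have hxm : x ∈ Submodule.span ℂ ({y} : Set Q3) := h ▸ Submodule.mem_span_singleton_self x
  obtain ⟨c, rfl⟩ := Submodule.mem_span_singleton.mp hxm
  exact hx (by simp [hy])

lemma prod_line_cases (u v w : Q) (hne : tp3 u v w ≠ 0) (hmem : tp3 u v w ∈ SV4) :
    Submodule.span ℂ {tp3 u v w} = Submodule.span ℂ {ketE 0 0 0} ∨
    Submodule.span ℂ {tp3 u v w} = Submodule.span ℂ {ketE 1 1 1} ∨
    Submodule.span ℂ {tp3 u v w} =
      Submodule.span ℂ {tp3 (ket2 0 - ket2 1) (ket2 0 - ket2 1) (ket2 0 - ket2 1)} ∨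
    Submodule.span ℂ {tp3 u v w} = Submodule.span ℂ {tp3 (ket2 1) (ket2 0 - ket2 1) (ket2 0)} ∨
    Submodule.span ℂ {tp3 u v w} = Submodule.span ℂ {tp3 (ket2 0) (ket2 1) (ket2 0 - ket2 1)} ∨
    Submodule.span ℂ {tp3 u v w} = Submodule.span ℂ {tp3 (ket2 0 - ket2 1) (ket2 0) (ket2 1)} := by
  obtain ⟨p, hp⟩ := Function.ne_iff.mp (show (tp3 u v w).ofLp ≠ (0 : Q3).ofLp from fun h => hne (WithLp.ofLp_injective 2 h))
  obtain ⟨x, y, z⟩ := p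
  have hp' : u x * v y * w z ≠ 0 := by simpa [tp3] using hp
  have hux : u x ≠ 0 := fun h => hp' (by simp [h])
  have hvy : v y ≠ 0 := fun h => hp' (by simp [h])
  have hwz : w z ≠ 0 := fun h => hp' (by simp [h])
  have hU : u 0 ≠ 0 ∨ u 1 ≠ 0 := by fin_cases x; exacts [Or.inl hux, Or.inr hux]
  have hV : v 0 ≠ 0 ∨ v 1 ≠ 0 := by fin_cases y; exacts [Or.inl hvy, Or.inr hvy]
  have hW : w 0 ≠ 0 ∨ w 1 ≠ 0 := by fin_cases z; exacts [Or.inl hwz, Or.inr hwz]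
  rw [mem_SV4_iff] at hmem
  obtain ⟨E1, E2, E3⟩ := hmem
  have E1' : u 0 * v 1 * w 0 + u 0 * v 1 * w 1 = 0 := E1
  have E2' : u 1 * v 0 * w 0 + u 1 * v 1 * w 0 = 0 := E2
  have E3' : u 0 * v 0 * w 1 + u 1 * v 0 * w 1 = 0 := E3
  have h1 : u 0 * v 1 * (w 0 + w 1) = 0 := by linear_combination E1'
  rcases mul_eq_zero.mp h1 with h1' | hw01
  · rcases mul_eq_zero.mp h1' with ha | hd
    · -- u 0 = 0
      have hb : u 1 ≠ 0 := hU.resolve_left (fun h => h ha)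
      have h3 : u 1 * (v 0 * w 1) = 0 := by linear_combination E3' - v 0 * w 1 * ha
      have hcf : v 0 * w 1 = 0 := (mul_eq_zero.mp h3).resolve_left hb
      have h2 : u 1 * (w 0 * (v 0 + v 1)) = 0 := by linear_combination E2'
      have h2' : w 0 * (v 0 + v 1) = 0 := (mul_eq_zero.mp h2).resolve_left hb
      rcases mul_eq_zero.mp h2' with he | hcd
      · -- w 0 = 0 : |111>
        have hf : w 1 ≠ 0 := hW.resolve_left (fun h => h he)
        have hc : v 0 = 0 := (mul_eq_zero.mp hcf).resolve_right hf
        have hd : v 1 ≠ 0 := hV.resolve_left (fun h => h hc)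
        refine Or.inr (Or.inl ?_)
        apply span_eq_of_smul (mul_ne_zero (mul_ne_zero hb hd) hf)
        ext q; obtain ⟨x, y, z⟩ := q
        fin_cases x <;> fin_cases y <;> fin_cases z <;>
          simp [tp3, ketE, ket2_apply, ha, hc, he] <;> ring
      · -- v 0 + v 1 = 0 : |1>(-)|0>
        have hc : v 0 ≠ 0 := by
          intro h
          rcases hV with h' | h'
          · exact h' h
          · exact h' (by linear_combination hcd - h)
        have hf : w 1 = 0 := (mul_eq_zero.mp hcf).resolve_left hc
        have he : w 0 ≠ 0 := hW.resolve_right (fun h => h hf)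
        have hd : v 1 = -v 0 := by linear_combination hcd
        refine Or.inr (Or.inr (Or.inr (Or.inl ?_)))
        apply span_eq_of_smul (mul_ne_zero (mul_ne_zero hb hc) he)
        ext q; obtain ⟨x, y, z⟩ := q
        fin_cases x <;> fin_cases y <;> fin_cases z <;>
          simp [tp3, ket2_apply, ha, hd, hf] <;> ring
    · -- v 1 = 0
      have hc : v 0 ≠ 0 := hV.resolve_right (fun h => h hd)
      have h2 : v 0 * (u 1 * w 0) = 0 := by linear_combination E2' - u 1 * w 0 * hd
      have hbe : u 1 * w 0 = 0 := (mul_eq_zero.mp h2).resolve_left hc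
      have h3 : v 0 * (w 1 * (u 0 + u 1)) = 0 := by linear_combination E3'
      have h3' : w 1 * (u 0 + u 1) = 0 := (mul_eq_zero.mp h3).resolve_left hc
      rcases mul_eq_zero.mp hbe with hb | he
      · -- u 1 = 0 : |000>
        have ha : u 0 ≠ 0 := hU.resolve_right (fun h => h hb)
        have hf : w 1 = 0 := by
          rcases mul_eq_zero.mp h3' with h | h
          · exact h
          · exact absurd (by linear_combination h - hb) ha
        have he : w 0 ≠ 0 := hW.resolve_right (fun h => h hf)
        refine Or.inl ?_
        apply span_eq_of_smul (mul_ne_zero (mul_ne_zero ha hc) he)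
        ext q; obtain ⟨x, y, z⟩ := q
        fin_cases x <;> fin_cases y <;> fin_cases z <;>
          simp [tp3, ketE, ket2_apply, hb, hd, hf] <;> ring
      · -- w 0 = 0 : (-)|0>|1>
        have hf : w 1 ≠ 0 := hW.resolve_left (fun h => h he)
        have hab : u 0 + u 1 = 0 := (mul_eq_zero.mp h3').resolve_left hf
        have ha : u 0 ≠ 0 := by
          intro h
          rcases hU with h' | h'
          · exact h' h
          · exact h' (by linear_combination hab - h)
        have hb : u 1 = -u 0 := by linear_combination hab
        refine Or.inr (Or.inr (Or.inr (Or.inr (Or.inr ?_))))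
        apply span_eq_of_smul (mul_ne_zero (mul_ne_zero ha hc) hf)
        ext q; obtain ⟨x, y, z⟩ := q
        fin_cases x <;> fin_cases y <;> fin_cases z <;>
          simp [tp3, ket2_apply, hb, hd, he] <;> ring
  · -- w 0 + w 1 = 0
    have he : w 0 ≠ 0 := by
      intro h
      rcases hW with h' | h'
      · exact h' h
      · exact h' (by linear_combination hw01 - h)
    have hf : w 1 = -w 0 := by linear_combination hw01
    have h2 : w 0 * (u 1 * (v 0 + v 1)) = 0 := by linear_combination E2'
    have h2' : u 1 * (v 0 + v 1) = 0 := (mul_eq_zero.mp h2).resolve_left he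
    have h3 : w 0 * (v 0 * (u 0 + u 1)) = 0 := by
      linear_combination v 0 * (u 0 + u 1) * hf - E3'
    have h3' : v 0 * (u 0 + u 1) = 0 := (mul_eq_zero.mp h3).resolve_left he
    rcases mul_eq_zero.mp h2' with hb | hcd
    · -- u 1 = 0 : |0>|1>(-)
      have ha : u 0 ≠ 0 := hU.resolve_right (fun h => h hb)
      have hc : v 0 = 0 := by
        rcases mul_eq_zero.mp h3' with h | h
        · exact h
        · exact absurd (by linear_combination h - hb) ha
      have hd : v 1 ≠ 0 := hV.resolve_left (fun h => h hc)
      refine Or.inr (Or.inr (Or.inr (Or.inr (Or.inl ?_))))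
      apply span_eq_of_smul (mul_ne_zero (mul_ne_zero ha hd) he)
      ext q; obtain ⟨x, y, z⟩ := q
      fin_cases x <;> fin_cases y <;> fin_cases z <;>
        simp [tp3, ket2_apply, hb, hc, hf] <;> ring
    · -- v 0 + v 1 = 0 : (-)(-)(-)
      have hc : v 0 ≠ 0 := by
        intro h
        rcases hV with h' | h'
        · exact h' h
        · exact h' (by linear_combination hcd - h)
      have hab : u 0 + u 1 = 0 := (mul_eq_zero.mp h3').resolve_left hc
      have ha : u 0 ≠ 0 := by
        intro h
        rcases hU with h' | h'
        · exact h' h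
        · exact h' (by linear_combination hab - h)
      have hb : u 1 = -u 0 := by linear_combination hab
      have hd : v 1 = -v 0 := by linear_combination hcd
      refine Or.inr (Or.inr (Or.inl ?_))
      apply span_eq_of_smul (mul_ne_zero (mul_ne_zero ha hc) he)
      ext q; obtain ⟨x, y, z⟩ := q
      fin_cases x <;> fin_cases y <;> fin_cases z <;>
        simp [tp3, ket2_apply, hb, hd, hf] <;> ring

theorem statement8 :
    prodLines3 SV4 =
      {Submodule.span ℂ {ketE 0 0 0},
       Submodule.span ℂ {ketE 1 1 1},
       Submodule.span ℂ {tp3 (ket2 0 - ket2 1) (ket2 0 - ket2 1) (ket2 0 - ket2 1)},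
       Submodule.span ℂ {tp3 (ket2 1) (ket2 0 - ket2 1) (ket2 0)},
       Submodule.span ℂ {tp3 (ket2 0) (ket2 1) (ket2 0 - ket2 1)},
       Submodule.span ℂ {tp3 (ket2 0 - ket2 1) (ket2 0) (ket2 1)}} ∧
    (prodLines3 SV4).ncard = 6 := by
  have hset : prodLines3 SV4 =
      {Submodule.span ℂ {ketE 0 0 0},
       Submodule.span ℂ {ketE 1 1 1},
       Submodule.span ℂ {tp3 (ket2 0 - ket2 1) (ket2 0 - ket2 1) (ket2 0 - ket2 1)},
       Submodule.span ℂ {tp3 (ket2 1) (ket2 0 - ket2 1) (ket2 0)},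
       Submodule.span ℂ {tp3 (ket2 0) (ket2 1) (ket2 0 - ket2 1)},
       Submodule.span ℂ {tp3 (ket2 0 - ket2 1) (ket2 0) (ket2 1)}} := by
    ext L
    constructor
    · rintro ⟨ξ, hne, hmem, ⟨u, v, w, rfl⟩, rfl⟩
      simpa [Set.mem_insert_iff, Set.mem_singleton_iff] using
        prod_line_cases u v w hne hmem
    · intro hL
      simp only [Set.mem_insert_iff, Set.mem_singleton_iff] at hL
      rcases hL with rfl | rfl | rfl | rfl | rfl | rfl
      · refine ⟨ketE 0 0 0, ?_, ?_, ⟨_, _, _, rfl⟩, rfl⟩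
        · intro h
          have := congrArg (fun ψ : Q3 => ψ (0, 0, 0)) h
          simp [ketE, tp3, ket2_apply] at this
        · rw [mem_SV4_iff]
          refine ⟨?_, ?_, ?_⟩ <;> norm_num [ketE, tp3, ket2_apply]
      · refine ⟨ketE 1 1 1, ?_, ?_, ⟨_, _, _, rfl⟩, rfl⟩
        · intro h
          have := congrArg (fun ψ : Q3 => ψ (1, 1, 1)) h
          simp [ketE, tp3, ket2_apply] at this
        · rw [mem_SV4_iff]
          refine ⟨?_, ?_, ?_⟩ <;> norm_num [ketE, tp3, ket2_apply]
      · refine ⟨_, ?_, ?_, ⟨_, _, _, rfl⟩, rfl⟩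
        · intro h
          have := congrArg (fun ψ : Q3 => ψ (0, 0, 0)) h
          simp [tp3, ket2_apply] at this
        · rw [mem_SV4_iff]
          refine ⟨?_, ?_, ?_⟩ <;> norm_num [tp3, ket2_apply]
      · refine ⟨_, ?_, ?_, ⟨_, _, _, rfl⟩, rfl⟩
        · intro h
          have := congrArg (fun ψ : Q3 => ψ (1, 0, 0)) h
          simp [tp3, ket2_apply] at this
        · rw [mem_SV4_iff]
          refine ⟨?_, ?_, ?_⟩ <;> norm_num [tp3, ket2_apply]
      · refine ⟨_, ?_, ?_, ⟨_, _, _, rfl⟩, rfl⟩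
        · intro h
          have := congrArg (fun ψ : Q3 => ψ (0, 1, 0)) h
          simp [tp3, ket2_apply] at this
        · rw [mem_SV4_iff]
          refine ⟨?_, ?_, ?_⟩ <;> norm_num [tp3, ket2_apply]
      · refine ⟨_, ?_, ?_, ⟨_, _, _, rfl⟩, rfl⟩
        · intro h
          have := congrArg (fun ψ : Q3 => ψ (0, 0, 1)) h
          simp [tp3, ket2_apply] at this
        · rw [mem_SV4_iff]
          refine ⟨?_, ?_, ?_⟩ <;> norm_num [tp3, ket2_apply]
  refine ⟨hset, ?_⟩
  rw [hset]
  have d12 : Submodule.span ℂ {ketE 0 0 0} ≠ Submodule.span ℂ {ketE 1 1 1} :=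
    span_ne_of (0,0,0) (by norm_num [ketE, tp3, ket2_apply]) (by norm_num [ketE, tp3, ket2_apply])
  have d13 : Submodule.span ℂ {tp3 (ket2 0 - ket2 1) (ket2 0 - ket2 1) (ket2 0 - ket2 1)} ≠
      Submodule.span ℂ {ketE 0 0 0} :=
    span_ne_of (1,1,1) (by norm_num [tp3, ket2_apply]) (by norm_num [ketE, tp3, ket2_apply])
  have d14 : Submodule.span ℂ {ketE 0 0 0} ≠ Submodule.span ℂ {tp3 (ket2 1) (ket2 0 - ket2 1) (ket2 0)} :=
    span_ne_of (0,0,0) (by norm_num [ketE, tp3, ket2_apply]) (by norm_num [tp3, ket2_apply])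
  have d15 : Submodule.span ℂ {ketE 0 0 0} ≠ Submodule.span ℂ {tp3 (ket2 0) (ket2 1) (ket2 0 - ket2 1)} :=
    span_ne_of (0,0,0) (by norm_num [ketE, tp3, ket2_apply]) (by norm_num [tp3, ket2_apply])
  have d16 : Submodule.span ℂ {ketE 0 0 0} ≠ Submodule.span ℂ {tp3 (ket2 0 - ket2 1) (ket2 0) (ket2 1)} :=
    span_ne_of (0,0,0) (by norm_num [ketE, tp3, ket2_apply]) (by norm_num [tp3, ket2_apply])
  have d23 : Submodule.span ℂ {tp3 (ket2 0 - ket2 1) (ket2 0 - ket2 1) (ket2 0 - ket2 1)} ≠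
      Submodule.span ℂ {ketE 1 1 1} :=
    span_ne_of (0,0,0) (by norm_num [tp3, ket2_apply]) (by norm_num [ketE, tp3, ket2_apply])
  have d24 : Submodule.span ℂ {ketE 1 1 1} ≠ Submodule.span ℂ {tp3 (ket2 1) (ket2 0 - ket2 1) (ket2 0)} :=
    span_ne_of (1,1,1) (by norm_num [ketE, tp3, ket2_apply]) (by norm_num [tp3, ket2_apply])
  have d25 : Submodule.span ℂ {ketE 1 1 1} ≠ Submodule.span ℂ {tp3 (ket2 0) (ket2 1) (ket2 0 - ket2 1)} :=
    span_ne_of (1,1,1) (by norm_num [ketE, tp3, ket2_apply]) (by norm_num [tp3, ket2_apply])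
  have d26 : Submodule.span ℂ {ketE 1 1 1} ≠ Submodule.span ℂ {tp3 (ket2 0 - ket2 1) (ket2 0) (ket2 1)} :=
    span_ne_of (1,1,1) (by norm_num [ketE, tp3, ket2_apply]) (by norm_num [tp3, ket2_apply])
  have d34 : Submodule.span ℂ {tp3 (ket2 0 - ket2 1) (ket2 0 - ket2 1) (ket2 0 - ket2 1)} ≠
      Submodule.span ℂ {tp3 (ket2 1) (ket2 0 - ket2 1) (ket2 0)} :=
    span_ne_of (0,0,0) (by norm_num [tp3, ket2_apply]) (by norm_num [tp3, ket2_apply])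
  have d35 : Submodule.span ℂ {tp3 (ket2 0 - ket2 1) (ket2 0 - ket2 1) (ket2 0 - ket2 1)} ≠
      Submodule.span ℂ {tp3 (ket2 0) (ket2 1) (ket2 0 - ket2 1)} :=
    span_ne_of (0,0,0) (by norm_num [tp3, ket2_apply]) (by norm_num [tp3, ket2_apply])
  have d36 : Submodule.span ℂ {tp3 (ket2 0 - ket2 1) (ket2 0 - ket2 1) (ket2 0 - ket2 1)} ≠
      Submodule.span ℂ {tp3 (ket2 0 - ket2 1) (ket2 0) (ket2 1)} :=
    span_ne_of (0,0,0) (by norm_num [tp3, ket2_apply]) (by norm_num [tp3, ket2_apply])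
  have d45 : Submodule.span ℂ {tp3 (ket2 1) (ket2 0 - ket2 1) (ket2 0)} ≠
      Submodule.span ℂ {tp3 (ket2 0) (ket2 1) (ket2 0 - ket2 1)} :=
    span_ne_of (1,0,0) (by norm_num [tp3, ket2_apply]) (by norm_num [tp3, ket2_apply])
  have d46 : Submodule.span ℂ {tp3 (ket2 1) (ket2 0 - ket2 1) (ket2 0)} ≠
      Submodule.span ℂ {tp3 (ket2 0 - ket2 1) (ket2 0) (ket2 1)} :=
    span_ne_of (1,0,0) (by norm_num [tp3, ket2_apply]) (by norm_num [tp3, ket2_apply])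
  have d56 : Submodule.span ℂ {tp3 (ket2 0) (ket2 1) (ket2 0 - ket2 1)} ≠
      Submodule.span ℂ {tp3 (ket2 0 - ket2 1) (ket2 0) (ket2 1)} :=
    span_ne_of (0,1,0) (by norm_num [tp3, ket2_apply]) (by norm_num [tp3, ket2_apply])
  rw [Set.ncard_insert_of_notMem (by
        simp only [Set.mem_insert_iff, Set.mem_singleton_iff]
        push_neg
        exact ⟨d12, d13.symm, d14, d15, d16⟩),
      Set.ncard_insert_of_notMem (by
        simp only [Set.mem_insert_iff, Set.mem_singleton_iff]
        push_neg
        exact ⟨d23.symm, d24, d25, d26⟩),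
      Set.ncard_insert_of_notMem (by
        simp only [Set.mem_insert_iff, Set.mem_singleton_iff]
        push_neg
        exact ⟨d34, d35, d36⟩),
      Set.ncard_insert_of_notMem (by
        simp only [Set.mem_insert_iff, Set.mem_singleton_iff]
        push_neg
        exact ⟨d45, d46⟩),
      Set.ncard_insert_of_notMem (by
        simp only [Set.mem_singleton_iff]
        exact d56),
      Set.ncard_singleton]
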